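/- Let 𝕂 be a field of characteristic 0 and ω a polynomial in n variables y₁,…,yₙ. Write ω(y+t) = Σ_{α∈A,β∈B} θ_{α,β} y^α t^β in the polynomial ring in the 2n variables y₁,…,yₙ,t₁,…,tₙ, where A, B ⊂ ℕⁿ are finite sets containing the supports. Then μ(ω) equals the rank of the matrix Θ = (θ_{α,β})_{α∈A,β∈B}. -/

import Mathlib

open MvPolynomial

namespace PolyExp

variable {K : Type*} [Field K] {n : ℕ}

/-- The iterated partial derivative operator `∂^β` on polynomials. -/
noncomputable def pderivPow (β : Fin n →₀ ℕ) :
    Module.End K (MvPolynomial (Fin n) K) :=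
  (List.ofFn fun i : Fin n =>
    ((MvPolynomial.pderiv i).toLinearMap : Module.End K (MvPolynomial (Fin n) K)) ^ (β i)).prod

/-- The constant coefficient differential operator `ω(∂) = Σ_β ω_β ∂^β`. -/
noncomputable def diffOp (ω : MvPolynomial (Fin n) K) :
    Module.End K (MvPolynomial (Fin n) K) :=
  ∑ β ∈ ω.support, ω.coeff β • pderivPow β

/-- The evaluation linear form `e_ξ : p ↦ p(ξ)`. -/
noncomputable def evalDual (ξ : Fin n → K) : Module.Dual K (MvPolynomial (Fin n) K) :=
  (MvPolynomial.aeval ξ).toLinearMap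

/-- The polynomial-exponential linear form `ω·e_ξ : p ↦ (ω(∂)p)(ξ)`. -/
noncomputable def polyExpDual (ω : MvPolynomial (Fin n) K) (ξ : Fin n → K) :
    Module.Dual K (MvPolynomial (Fin n) K) :=
  evalDual ξ ∘ₗ diffOp ω

/-- The Hankel operator `H_σ : p ↦ (q ↦ σ(p·q))`. -/
noncomputable def hankel (σ : Module.Dual K (MvPolynomial (Fin n) K)) :
    MvPolynomial (Fin n) K →ₗ[K] Module.Dual K (MvPolynomial (Fin n) K) :=
  (LinearMap.llcomp K (MvPolynomial (Fin n) K) (MvPolynomial (Fin n) K) K σ) ∘ₗ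
    (LinearMap.mul K (MvPolynomial (Fin n) K))

/-- `μ(ω)`: the dimension of the span of all partial derivatives of `ω`. -/
noncomputable def mu (ω : MvPolynomial (Fin n) K) : ℕ :=
  Module.finrank K (Submodule.span K (Set.range fun β : Fin n →₀ ℕ => pderivPow β ω))

/-- The kernel `I_σ` of the Hankel operator, as an ideal. -/
def hankelKer (σ : Module.Dual K (MvPolynomial (Fin n) K)) : Ideal (MvPolynomial (Fin n) K) where
  carrier := {p | ∀ q, σ (p * q) = 0}
  add_mem' := by
    intro a b ha hb q
    rw [add_mul, map_add, ha q, hb q, add_zero]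
  zero_mem' := by
    intro q
    rw [zero_mul, map_zero]
  smul_mem' := by
    intro c p hp q
    rw [smul_eq_mul, mul_comm c p, mul_assoc]
    exact hp (c * q)

end PolyExp

section Aux
open MvPolynomial Finsupp

theorem coeff_pderiv' {K : Type*} [CommRing K] {n : ℕ} (i : Fin n) (p : MvPolynomial (Fin n) K)
    (m : Fin n →₀ ℕ) :
    coeff m (pderiv i p) = (m i + 1) * coeff (m + single i 1) p := by
  induction p using MvPolynomial.induction_on' with
  | add p q hp hq => simp [hp, hq, mul_add]
  | monomial s a =>
    simp only [pderiv_monomial, coeff_monomial]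
    rcases eq_or_ne s (m + single i 1) with rfl | hs
    · rw [if_pos rfl, if_pos]
      · push_cast
        simp
        ring
      · ext j
        rcases eq_or_ne j i with rfl | hj
        · simp
        · simp [single_apply, Ne.symm hj]
    · rw [if_neg hs, mul_zero]
      rcases Nat.eq_zero_or_pos (s i) with h0 | hpos
      · simp [h0]
      · rw [if_neg]
        intro hm
        apply hs
        rw [← hm]
        ext j
        rcases eq_or_ne j i with rfl | hj
        · simp [Nat.sub_add_cancel hpos]
        · simp [single_apply, Ne.symm hj]

theorem coeff_pderiv_pow' {K : Type*} [CommRing K] {n : ℕ} (i : Fin n) (k : ℕ)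
    (p : MvPolynomial (Fin n) K) (m : Fin n →₀ ℕ) :
    coeff m ((((pderiv i).toLinearMap : Module.End K (MvPolynomial (Fin n) K)) ^ k) p)
      = ((m i + k).descFactorial k : ℕ) * coeff (m + single i k) p := by
  induction k generalizing p m with
  | zero => simp
  | succ k ih =>
    rw [pow_succ, Module.End.mul_apply, ih,
      show ((pderiv i).toLinearMap : Module.End K (MvPolynomial (Fin n) K)) p = pderiv i p
        from rfl,
      coeff_pderiv']
    have h1 : (m + single i k) i = m i + k := by simp
    have h2 : m + single i k + single i 1 = m + single i (k + 1) := by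
      rw [add_assoc, Finsupp.single_add]
    rw [h1, h2, show m i + (k + 1) = (m i + k) + 1 by ring, Nat.succ_descFactorial_succ]
    push_cast
    ring

theorem coeff_pderivPow' {K : Type*} [Field K] {n : ℕ} (β : Fin n →₀ ℕ)
    (p : MvPolynomial (Fin n) K) (m : Fin n →₀ ℕ) :
    coeff m (PolyExp.pderivPow β p)
      = ((∏ i, (m i + β i).descFactorial (β i) : ℕ)) * coeff (m + β) p := by
  have key : ∀ (L : List (Fin n)), L.Nodup → ∀ (p : MvPolynomial (Fin n) K) (m : Fin n →₀ ℕ),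
      coeff m ((L.map fun i =>
          ((pderiv i).toLinearMap : Module.End K (MvPolynomial (Fin n) K)) ^ (β i)).prod p)
        = ((L.map fun i => (m i + β i).descFactorial (β i)).prod : ℕ)
          * coeff (m + (L.map fun i => single i (β i)).sum) p := by
    intro L
    induction L with
    | nil => intro _ p m; simp
    | cons i L ih =>
      intro hnd p m
      rw [List.nodup_cons] at hnd
      rw [List.map_cons, List.prod_cons, Module.End.mul_apply, coeff_pderiv_pow',
        ih hnd.2]
      have hm : ∀ j ∈ L, ((m + single i (β i)) j + β j).descFactorial (β j)
          = (m j + β j).descFactorial (β j) := by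
        intro j hj
        have : j ≠ i := fun h => hnd.1 (h ▸ hj)
        simp [single_apply, Ne.symm this]
      rw [List.map_congr_left hm, List.map_cons, List.prod_cons, List.map_cons,
        List.sum_cons, ← add_assoc]
      push_cast
      ring
  have h1 : PolyExp.pderivPow (K := K) β
      = ((List.finRange n).map fun i =>
          ((pderiv i).toLinearMap : Module.End K (MvPolynomial (Fin n) K)) ^ (β i)).prod := by
    rw [PolyExp.pderivPow, List.ofFn_eq_map]
  rw [h1, key _ (List.nodup_finRange n), ← Fin.prod_univ_def, ← Fin.sum_univ_def,
    univ_sum_single]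

end Aux

/-- The expansion `ω(y+t)` of `ω` in the `2n` variables `y₁,…,yₙ,t₁,…,tₙ`
(`Sum.inl` indices are the `y`-variables, `Sum.inr` indices the `t`-variables). -/
noncomputable def shiftExpand {K : Type*} [Field K] {n : ℕ} (ω : MvPolynomial (Fin n) K) :
    MvPolynomial (Fin n ⊕ Fin n) K :=
  MvPolynomial.aeval (fun i => MvPolynomial.X (Sum.inl i) + MvPolynomial.X (Sum.inr i)) ω

section Aux2
open MvPolynomial Finsupp
theorem symm_apply_inl {n : ℕ} (α β : Fin n →₀ ℕ) (i : Fin n) :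
    (sumFinsuppEquivProdFinsupp.symm (α, β)) (Sum.inl i) = α i :=
  sumFinsuppEquivProdFinsupp_symm_inl _ _

theorem symm_apply_inr {n : ℕ} (α β : Fin n →₀ ℕ) (i : Fin n) :
    (sumFinsuppEquivProdFinsupp.symm (α, β)) (Sum.inr i) = β i :=
  sumFinsuppEquivProdFinsupp_symm_inr _ _

theorem symm_sub_inl {n : ℕ} (α β : Fin n →₀ ℕ) (i : Fin n) :
    sumFinsuppEquivProdFinsupp.symm (α, β) - single (Sum.inl i) 1
      = sumFinsuppEquivProdFinsupp.symm (α - single i 1, β) := by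
  ext j
  rcases j with j | j <;>
    simp only [tsub_apply, symm_apply_inl, symm_apply_inr, single_apply, Sum.inl.injEq,
      Sum.inr.injEq, reduceCtorEq, if_false]
  rcases eq_or_ne i j with rfl | h
  · simp
  · simp [h]

theorem symm_sub_inr {n : ℕ} (α β : Fin n →₀ ℕ) (i : Fin n) :
    sumFinsuppEquivProdFinsupp.symm (α, β) - single (Sum.inr i) 1
      = sumFinsuppEquivProdFinsupp.symm (α, β - single i 1) := by
  ext j
  rcases j with j | j <;>
    simp only [tsub_apply, symm_apply_inl, symm_apply_inr, single_apply, Sum.inl.injEq,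
      Sum.inr.injEq, reduceCtorEq, if_false]
  rcases eq_or_ne i j with rfl | h
  · simp
  · simp [h]

theorem sub_add_single {n : ℕ} (α β : Fin n →₀ ℕ) (i : Fin n) (h : α i ≠ 0) :
    α - single i 1 + β = α + β - single i 1 := by
  ext j
  rcases eq_or_ne i j with rfl | hj
  · simp only [Finsupp.add_apply, tsub_apply, single_apply, eq_self_iff_true, if_true]
    omega
  · simp [single_apply, hj]

theorem coeff_shiftExpand' {K : Type*} [Field K] {n : ℕ} (ω : MvPolynomial (Fin n) K)
    (α β : Fin n →₀ ℕ) :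
    coeff (sumFinsuppEquivProdFinsupp.symm (α, β)) (shiftExpand ω)
      = ((∏ i, (α i + β i).choose (β i) : ℕ)) * coeff (α + β) ω := by
  induction ω using MvPolynomial.induction_on generalizing α β with
  | C c =>
    rw [shiftExpand, aeval_C, algebraMap_eq, coeff_C, coeff_C]
    rcases eq_or_ne (α + β) 0 with h0 | h0
    · have hα : α = 0 := by
        ext j
        have := DFunLike.congr_fun h0 j
        simp only [Finsupp.add_apply, Finsupp.zero_apply] at this ⊢
        omega
      have hβ : β = 0 := by
        ext j
        have := DFunLike.congr_fun h0 j
        simp only [Finsupp.add_apply, Finsupp.zero_apply] at this ⊢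
        omega
      subst hα; subst hβ
      rw [if_pos h0.symm, if_pos]
      · simp
      · symm; ext j; rcases j with j | j <;> simp [symm_apply_inl, symm_apply_inr]
    · rw [if_neg (fun h => h0 (by
        ext j
        have h1 := DFunLike.congr_fun h (Sum.inl j)
        have h2 := DFunLike.congr_fun h (Sum.inr j)
        simp only [symm_apply_inl, symm_apply_inr, Finsupp.zero_apply, Finsupp.add_apply] at h1 h2 ⊢
        omega)), if_neg (Ne.symm h0), mul_zero]
  | add p q hp hq =>
    rw [shiftExpand, map_add, coeff_add, ← shiftExpand, ← shiftExpand, hp, hq, coeff_add]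
    ring
  | mul_X p i hp =>
    rw [shiftExpand, map_mul, aeval_X, ← shiftExpand, mul_add, coeff_add, coeff_mul_X',
      coeff_mul_X', coeff_mul_X']
    classical
    have memL : (Sum.inl i ∈ (sumFinsuppEquivProdFinsupp.symm (α, β)).support) ↔ α i ≠ 0 := by
      rw [Finsupp.mem_support_iff, symm_apply_inl]
    have memR : (Sum.inr i ∈ (sumFinsuppEquivProdFinsupp.symm (α, β)).support) ↔ β i ≠ 0 := by
      rw [Finsupp.mem_support_iff, symm_apply_inr]
    have memAB : (i ∈ (α + β).support) ↔ ¬(α i = 0 ∧ β i = 0) := by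
      rw [Finsupp.mem_support_iff, Finsupp.add_apply]
      omega
    rcases eq_or_ne (α i) 0 with hα | hα <;> rcases eq_or_ne (β i) 0 with hβ | hβ
    · rw [if_neg (memL.not_left.mpr (by simpa using hα)),
        if_neg (memR.not_left.mpr (by simpa using hβ)),
        if_neg (fun h => (memAB.mp h) ⟨hα, hβ⟩), mul_zero, add_zero]
    · -- α i = 0, β i ≠ 0
      rw [if_neg (memL.not_left.mpr (by simpa using hα)), zero_add,
        if_pos (memR.mpr hβ), if_pos (memAB.mpr (fun h => hβ h.2)),
        symm_sub_inr, hp,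
        show α + (β - single i 1) = α + β - single i 1 by
          rw [add_comm α β, add_comm α (β - single i 1)]; exact sub_add_single β α i hβ]
      congr 2
      refine Finset.prod_congr rfl fun j _ => ?_
      rcases eq_or_ne i j with rfl | hj
      · simp only [tsub_apply, single_apply, if_pos rfl, hα, Nat.zero_add]
        rw [Nat.choose_self, Nat.choose_self]
      · simp [single_apply, hj]
    · -- α i ≠ 0, β i = 0
      rw [if_neg (memR.not_left.mpr (by simpa using hβ)), add_zero,
        if_pos (memL.mpr hα), if_pos (memAB.mpr (fun h => hα h.1)),
        symm_sub_inl, hp, sub_add_single α β i hα]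
      congr 2
      refine Finset.prod_congr rfl fun j _ => ?_
      rcases eq_or_ne i j with rfl | hj
      · simp [tsub_apply, hβ]
      · simp [single_apply, hj]
    · -- both nonzero
      rw [if_pos (memL.mpr hα), if_pos (memR.mpr hβ),
        if_pos (memAB.mpr (fun h => hα h.1)),
        symm_sub_inl, symm_sub_inr, hp, hp, sub_add_single α β i hα,
        show α + (β - single i 1) = α + β - single i 1 by
          rw [add_comm α β, add_comm α (β - single i 1)]; exact sub_add_single β α i hβ,
        ← add_mul]
      congr 1
      rw [← Finset.mul_prod_erase Finset.univ _ (Finset.mem_univ i),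
        ← Finset.mul_prod_erase Finset.univ _ (Finset.mem_univ i),
        ← Finset.mul_prod_erase Finset.univ _ (Finset.mem_univ i)]
      have he1 : ∀ j ∈ Finset.univ.erase i,
          (((α - single i 1 : Fin n →₀ ℕ) j + β j).choose (β j) : ℕ)
            = (α j + β j).choose (β j) := by
        intro j hj
        have hji : j ≠ i := (Finset.mem_erase.mp hj).1
        simp [single_apply, Ne.symm hji]
      have he2 : ∀ j ∈ Finset.univ.erase i,
          ((α j + (β - single i 1 : Fin n →₀ ℕ) j).choose
              ((β - single i 1 : Fin n →₀ ℕ) j) : ℕ)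
            = (α j + β j).choose (β j) := by
        intro j hj
        have hji : j ≠ i := (Finset.mem_erase.mp hj).1
        simp [single_apply, Ne.symm hji]
      obtain ⟨a, ha⟩ := Nat.exists_eq_succ_of_ne_zero hα
      obtain ⟨b, hb⟩ := Nat.exists_eq_succ_of_ne_zero hβ
      have h1 : (α - single i 1 : Fin n →₀ ℕ) i = a := by
        rw [tsub_apply, ha]; simp
      have h2 : (β - single i 1 : Fin n →₀ ℕ) i = b := by
        rw [tsub_apply, hb]; simp
      rw [Finset.prod_congr rfl he1, Finset.prod_congr rfl he2, ← Nat.cast_add, ← add_mul]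
      congr 2
      rw [h1, h2, ha, hb, show a + Nat.succ b = (a + b) + 1 by omega,
        show Nat.succ a + b = (a + b) + 1 by omega,
        show Nat.succ a + Nat.succ b = ((a + b) + 1) + 1 by omega,
        show Nat.succ b = b + 1 by omega, Nat.choose_succ_succ]
      exact Nat.add_comm _ _

theorem bridge {K : Type*} [Field K] {n : ℕ} (ω : MvPolynomial (Fin n) K)
    (α β : Fin n →₀ ℕ) :
    ((∏ i, (β i).factorial : ℕ) : K)
        * coeff (sumFinsuppEquivProdFinsupp.symm (α, β)) (shiftExpand ω)
      = coeff α (PolyExp.pderivPow β ω) := by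
  rw [coeff_shiftExpand', coeff_pderivPow', ← mul_assoc, ← Nat.cast_mul,
    ← Finset.prod_mul_distrib]
  have : (∏ i, (β i).factorial * (α i + β i).choose (β i))
      = ∏ i, (α i + β i).descFactorial (β i) :=
    Finset.prod_congr rfl fun i _ => (Nat.descFactorial_eq_factorial_mul_choose _ _).symm
  rw [this]

end Aux2

/-- If `ω(y+t) = Σ_{α∈A,β∈B} θ_{α,β} y^α t^β` with `A, B` finite sets
containing the supports, then `μ(ω)` equals the rank of the matrix `Θ = (θ_{α,β})`. -/
theorem statement1 {K : Type*} [Field K] [CharZero K] {n : ℕ}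
    (ω : MvPolynomial (Fin n) K) (A B : Finset (Fin n →₀ ℕ))
    (hAB : ∀ γ ∈ (shiftExpand ω).support,
      (Finsupp.sumFinsuppEquivProdFinsupp γ).1 ∈ A ∧ (Finsupp.sumFinsuppEquivProdFinsupp γ).2 ∈ B) :
    (Matrix.of fun (a : A) (b : B) =>
        MvPolynomial.coeff (Finsupp.sumFinsuppEquivProdFinsupp.symm ((a : Fin n →₀ ℕ), (b : Fin n →₀ ℕ)))
          (shiftExpand ω)).rank = PolyExp.mu ω := by
  classical
  set M := Matrix.of fun (a : A) (b : B) =>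
      MvPolynomial.coeff
        (Finsupp.sumFinsuppEquivProdFinsupp.symm ((a : Fin n →₀ ℕ), (b : Fin n →₀ ℕ)))
        (shiftExpand ω) with hM
  set D : (Fin n →₀ ℕ) → MvPolynomial (Fin n) K := fun β => PolyExp.pderivPow β ω with hD
  set V : Submodule K (MvPolynomial (Fin n) K) := Submodule.span K (Set.range D) with hV
  set Φ : MvPolynomial (Fin n) K →ₗ[K] (A → K) :=
    LinearMap.pi (fun a : A => MvPolynomial.lcoeff K (a : Fin n →₀ ℕ)) with hPhi
  have hfac : ∀ β : Fin n →₀ ℕ, ((∏ i, (β i).factorial : ℕ) : K) ≠ 0 := fun β =>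
    Nat.cast_ne_zero.mpr (Finset.prod_ne_zero_iff.mpr fun i _ => Nat.factorial_ne_zero _)
  have hfst : ∀ (α β : Fin n →₀ ℕ),
      Finsupp.sumFinsuppEquivProdFinsupp
        (Finsupp.sumFinsuppEquivProdFinsupp.symm (α, β)) = (α, β) := fun α β =>
    Equiv.apply_symm_apply _ _
  -- D β = 0 for β ∉ B
  have hDzero : ∀ β : Fin n →₀ ℕ, β ∉ B → D β = 0 := by
    intro β hβ
    apply MvPolynomial.ext
    intro α
    rw [MvPolynomial.coeff_zero, ← bridge]
    have : MvPolynomial.coeff (Finsupp.sumFinsuppEquivProdFinsupp.symm (α, β))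
        (shiftExpand ω) = 0 := by
      by_contra hc
      have hm := hAB _ (MvPolynomial.mem_support_iff.mpr hc)
      rw [hfst] at hm
      exact hβ hm.2
    rw [this, mul_zero]
  -- support of D β is in A
  have hDsupp : ∀ (β α : Fin n →₀ ℕ), MvPolynomial.coeff α (D β) ≠ 0 → α ∈ A := by
    intro β α hc
    rw [← bridge] at hc
    have hc2 : MvPolynomial.coeff (Finsupp.sumFinsuppEquivProdFinsupp.symm (α, β))
        (shiftExpand ω) ≠ 0 := fun h => hc (by rw [h, mul_zero])
    have hm := hAB _ (MvPolynomial.mem_support_iff.mpr hc2)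
    rw [hfst] at hm
    exact hm.1
  -- columns of M
  have hcol : ∀ b : B, M.transpose b
      = ((((∏ i, ((b : Fin n →₀ ℕ) i).factorial : ℕ) : K))⁻¹) • Φ (D (b : Fin n →₀ ℕ)) := by
    intro b
    funext a
    have hb := bridge ω (a : Fin n →₀ ℕ) (b : Fin n →₀ ℕ)
    have : M.transpose b a = MvPolynomial.coeff
        (Finsupp.sumFinsuppEquivProdFinsupp.symm ((a : Fin n →₀ ℕ), (b : Fin n →₀ ℕ)))
        (shiftExpand ω) := rfl
    rw [this, Pi.smul_apply]
    have hPa : Φ (D (b : Fin n →₀ ℕ)) a = MvPolynomial.coeff (a : Fin n →₀ ℕ)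
        (D (b : Fin n →₀ ℕ)) := rfl
    rw [hPa, ← hb, smul_eq_mul, ← mul_assoc, inv_mul_cancel₀ (hfac _), one_mul]
  -- span of columns = Φ(V)
  have hspan : Submodule.span K (Set.range M.transpose) = V.map Φ := by
    apply le_antisymm
    · rw [Submodule.span_le]
      rintro - ⟨b, rfl⟩
      rw [hcol b]
      exact Submodule.mem_map_of_mem (Submodule.smul_mem _ _
        (Submodule.subset_span (Set.mem_range_self _)))
    · rw [hV, Submodule.map_span, Submodule.span_le]
      rintro - ⟨-, ⟨β, rfl⟩, rfl⟩
      by_cases hβ : β ∈ B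
      · have : Φ (D β) = ((∏ i, (β i).factorial : ℕ) : K) • M.transpose ⟨β, hβ⟩ := by
          rw [hcol ⟨β, hβ⟩, smul_smul, mul_inv_cancel₀ (hfac _), one_smul]
        rw [this]
        exact Submodule.smul_mem _ _ (Submodule.subset_span (Set.mem_range_self _))
      · rw [hDzero β hβ, map_zero]
        exact Submodule.zero_mem _
  -- rank M = finrank of Φ(V)
  have hrank : M.rank = Module.finrank K (V.map Φ) := by
    rw [Matrix.rank, Matrix.range_mulVecLin, ← hspan]
    rfl
  -- Φ is injective on V
  have hinj0 : ∀ p ∈ V, Φ p = 0 → p = 0 := by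
    intro p hp h0
    have hpW : ∀ α : Fin n →₀ ℕ, MvPolynomial.coeff α p ≠ 0 → α ∈ A := by
      rw [hV] at hp
      refine Submodule.span_induction ?_ ?_ ?_ ?_ hp
      · rintro - ⟨β, rfl⟩ α h; exact hDsupp β α h
      · intro α h; exact absurd (MvPolynomial.coeff_zero α) h
      · intro x y _ _ hx hy α h
        rw [MvPolynomial.coeff_add] at h
        by_cases h1 : MvPolynomial.coeff α x ≠ 0
        · exact hx α h1
        · push_neg at h1
          exact hy α (by rwa [h1, zero_add] at h)
      · intro c x _ hx α h
        rw [MvPolynomial.coeff_smul] at h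
        exact hx α fun h0 => h (by rw [h0, smul_zero])
    apply MvPolynomial.ext
    intro α
    rw [MvPolynomial.coeff_zero]
    by_cases hα : α ∈ A
    · exact congr_fun h0 ⟨α, hα⟩
    · by_contra hc
      exact hα (hpW α hc)
  have hinj : Function.Injective (Φ.comp V.subtype) := by
    rw [← LinearMap.ker_eq_bot, Submodule.eq_bot_iff]
    rintro ⟨p, hp⟩ hker
    exact Subtype.ext (hinj0 p hp hker)
  have hfin : Module.finrank K (V.map Φ) = Module.finrank K V := by
    have hr : LinearMap.range (Φ.comp V.subtype) = V.map Φ := by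
      rw [LinearMap.range_comp, Submodule.range_subtype]
    rw [← hr, LinearMap.finrank_range_of_inj hinj]
  rw [hrank, hfin]
  rfl
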